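/- For all integers n ≥ 2 and k ≥ 1, (1/n)·Σ_{j=1}^{n−1} j²·A_{n−1,j}·binom(n+k−j−1, n−1) = k^{n+1}/n − (n+1)·Σ_{s=1}^{k−2} s^n − 2·(k−1)^n − Σ_{s=1}^{k−1} s^{n−1} + (n−1)·(k−1)·Σ_{s=1}^{k−2} s^{n−1}. -/

import Mathlib

/-- Number of descents of a permutation of `{1,...,n}` (here `Fin n`, 0-indexed):
the number of positions `i` with `1 ≤ i ≤ n-1` and `π(i) > π(i+1)`. -/
def numDescents (n : ℕ) (π : Equiv.Perm (Fin n)) : ℕ :=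
  ((Finset.range (n - 1)).filter (fun i =>
    ∃ h : i + 1 < n, π ⟨i + 1, h⟩ < π ⟨i, Nat.lt_of_succ_lt h⟩)).card

/-- `π` has a cyclic descent at `n` if `π(n) > π(1)`. -/
def hasCyclicDescentAtLast (n : ℕ) (π : Equiv.Perm (Fin n)) : Prop :=
  ∃ h : 0 < n, π ⟨0, h⟩ < π ⟨n - 1, Nat.sub_lt h Nat.one_pos⟩

instance (n : ℕ) (π : Equiv.Perm (Fin n)) : Decidable (hasCyclicDescentAtLast n π) :=
  exists_prop_decidable _

/-- Number of cyclic descents: `d(π)+1` if `π` has a cyclic descent at `n`, else `d(π)`. -/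
def numCyclicDescents (n : ℕ) (π : Equiv.Perm (Fin n)) : ℕ :=
  numDescents n π + if hasCyclicDescentAtLast n π then 1 else 0

/-- The k-riffle shuffle measure `R_{k,n}(π) = binom(n+k-d(π)-1, n) / k^n`. -/
noncomputable def riffle (k n : ℕ) (π : Equiv.Perm (Fin n)) : ℝ :=
  (Nat.choose (n + k - numDescents n π - 1) n : ℝ) / (k : ℝ) ^ n

/-- The cut-then-k-riffle-shuffle measure
`C_{k,n}(π) = binom(n+k-cd(π)-1, n-1) / (n·k^(n-1))`. -/
noncomputable def cutRiffle (k n : ℕ) (π : Equiv.Perm (Fin n)) : ℝ :=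
  (Nat.choose (n + k - numCyclicDescents n π - 1) (n - 1) : ℝ) / ((n : ℝ) * (k : ℝ) ^ (n - 1))

/-- Eulerian number `A_{m,j}`: the number of permutations of `m` symbols with `j-1` descents. -/
def eulerianA (m j : ℕ) : ℕ :=
  (Finset.univ.filter (fun π : Equiv.Perm (Fin m) => numDescents m π = j - 1)).card

namespace Stmt11


lemma adj_add {v : ℕ → ℕ} {i j : ℕ} (h : ∀ t, i ≤ t → t + 1 ≤ j → v t + 1 ≤ v (t + 1))
    (hij : i ≤ j) : v i + (j - i) ≤ v j := by
  induction j with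
  | zero => obtain rfl : i = 0 := Nat.le_zero.mp hij; simp
  | succ j ih =>
    rcases Nat.lt_or_ge i (j + 1) with hij' | hij'
    · have hij'' : i ≤ j := by omega
      have := ih (fun t ht ht' => h t ht (by omega)) hij''
      have := h j (by omega) le_rfl
      omega
    · have : i = j + 1 := by omega
      subst this; simp

lemma adj_le {v : ℕ → ℕ} {i j : ℕ} (h : ∀ t, i ≤ t → t + 1 ≤ j → v t ≤ v (t + 1))
    (hij : i ≤ j) : v i ≤ v j := by
  induction j with
  | zero => obtain rfl : i = 0 := Nat.le_zero.mp hij; simp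
  | succ j ih =>
    rcases Nat.lt_or_ge i (j + 1) with hij' | hij'
    · have hij'' : i ≤ j := by omega
      have := ih (fun t ht ht' => h t ht (by omega)) hij''
      have := h j (by omega) le_rfl
      omega
    · have : i = j + 1 := by omega
      subst this; simp

/-- number of non-`D` positions below `i` -/
def aD (D : Finset ℕ) (i : ℕ) : ℕ := (Finset.range i \ D).card

lemma aD_succ_mem {D : Finset ℕ} {i : ℕ} (hi : i ∈ D) : aD D (i + 1) = aD D i := by
  unfold aD
  rw [Finset.range_add_one, Finset.insert_sdiff_of_mem _ hi]

lemma aD_succ_not_mem {D : Finset ℕ} {i : ℕ} (hi : i ∉ D) : aD D (i + 1) = aD D i + 1 := by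
  unfold aD
  rw [Finset.range_add_one, Finset.insert_sdiff_of_notMem _ hi,
    Finset.card_insert_of_notMem (by simp)]

lemma aD_mono {D : Finset ℕ} {i j : ℕ} (hij : i ≤ j) : aD D i ≤ aD D j :=
  Finset.card_le_card (Finset.sdiff_subset_sdiff (Finset.range_subset_range.2 hij) le_rfl)

lemma aD_le {D : Finset ℕ} (i : ℕ) : aD D i ≤ i := by
  have := Finset.card_le_card (Finset.sdiff_subset (s := Finset.range i) (t := D))
  simp [aD] at this ⊢; omega

lemma aD_add_inter {D : Finset ℕ} (i : ℕ) : aD D i + (Finset.range i ∩ D).card = i := by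
  have := Finset.card_sdiff_add_card_inter (Finset.range i) D
  simpa [aD] using this

lemma aD_top {D : Finset ℕ} {M : ℕ} (hD : D ⊆ Finset.range M) : aD D M = M - D.card := by
  unfold aD
  rw [Finset.card_sdiff_of_subset hD, Finset.card_range]


/-- strictly monotone maps `Fin r → Fin N` correspond to `r`-subsets of `Fin N` -/
def strictMonoEquiv (r N : ℕ) :
    {g : Fin r → Fin N // StrictMono g} ≃ {s : Finset (Fin N) // s.card = r} where
  toFun g := ⟨Finset.univ.image g.1, by
    rw [Finset.card_image_of_injective _ g.2.injective, Finset.card_univ, Fintype.card_fin]⟩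
  invFun s := ⟨⇑(s.1.orderEmbOfFin s.2), (s.1.orderEmbOfFin s.2).strictMono⟩
  left_inv g := by
    apply Subtype.ext
    exact (Finset.orderEmbOfFin_unique _
      (fun i => Finset.mem_image_of_mem _ (Finset.mem_univ i)) g.2).symm
  right_inv s := by
    apply Subtype.ext
    apply Finset.eq_of_subset_of_card_le
    · intro x hx
      obtain ⟨i, _, rfl⟩ := Finset.mem_image.1 hx
      exact Finset.orderEmbOfFin_mem s.1 s.2 i
    · rw [Finset.card_image_of_injective _ (s.1.orderEmbOfFin s.2).injective,
        Finset.card_univ, Fintype.card_fin, s.2]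

/-- weakly increasing sequences, strictly increasing at positions in `D` -/
def Constr (m x : ℕ) (D : Finset ℕ) (y : Fin m → Fin x) : Prop :=
  ∀ i : ℕ, ∀ h : i + 1 < m,
    y ⟨i, Nat.lt_of_succ_lt h⟩ ≤ y ⟨i + 1, h⟩ ∧
      (i ∈ D → y ⟨i, Nat.lt_of_succ_lt h⟩ < y ⟨i + 1, h⟩)

def constrEquiv (m x : ℕ) (D : Finset ℕ) (hm : 1 ≤ m) (hD : D ⊆ Finset.range (m - 1)) :
    {y : Fin m → Fin x // Constr m x D y} ≃
      {g : Fin m → Fin (x + (m - 1 - D.card)) // StrictMono g} where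
  toFun y := by
    refine ⟨fun i => ⟨(y.1 i : ℕ) + aD D i.1, ?_⟩, ?_⟩
    · have h1 : (y.1 i : ℕ) < x := (y.1 i).2
      have h2 : aD D i.1 ≤ aD D (m - 1) := aD_mono (by omega)
      rw [aD_top hD] at h2
      omega
    · intro i j hij
      have key : ∀ t, i.1 ≤ t → t + 1 ≤ j.1 →
          (fun t => if h : t < m then (y.1 ⟨t, h⟩ : ℕ) + aD D t else 0) t + 1 ≤
          (fun t => if h : t < m then (y.1 ⟨t, h⟩ : ℕ) + aD D t else 0) (t + 1) := by
        intro t ht ht'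
        have htm : t + 1 < m := by omega
        simp only [dif_pos htm, dif_pos (Nat.lt_of_succ_lt htm)]
        obtain ⟨hle, hlt⟩ := y.2 t htm
        by_cases hmem : t ∈ D
        · have := hlt hmem
          rw [aD_succ_mem hmem]
          simp only [Fin.lt_iff_val_lt_val] at this
          omega
        · rw [aD_succ_not_mem hmem]
          simp only [Fin.le_iff_val_le_val] at hle
          omega
      have := adj_add key (Nat.le_of_lt hij)
      simp only [dif_pos i.2, dif_pos j.2, Fin.eta] at this
      have hij' : i.1 < j.1 := hij
      simp only [Fin.lt_iff_val_lt_val]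
      omega
  invFun g := by
    refine ⟨fun i => ⟨(g.1 i : ℕ) - aD D i.1, ?_⟩, ?_⟩
    · -- bound : g i - aD i < x
      have hd : D.card ≤ m - 1 := by
        have := Finset.card_le_card hD; simpa using this
      have key : ∀ t, i.1 ≤ t → t + 1 ≤ m - 1 →
          (fun t => if h : t < m then (g.1 ⟨t, h⟩ : ℕ) else 0) t + 1 ≤
          (fun t => if h : t < m then (g.1 ⟨t, h⟩ : ℕ) else 0) (t + 1) := by
        intro t ht ht'
        have htm : t + 1 < m := by omega
        simp only [dif_pos htm, dif_pos (Nat.lt_of_succ_lt htm)]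
        exact g.2 (show (⟨t, Nat.lt_of_succ_lt htm⟩ : Fin m) < ⟨t + 1, htm⟩ from
          by simp [Fin.lt_iff_val_lt_val])
      have h1 := adj_add key (show i.1 ≤ m - 1 by omega)
      simp only [dif_pos i.2, dif_pos (show m - 1 < m by omega), Fin.eta] at h1
      have h2 : (g.1 ⟨m - 1, by omega⟩ : ℕ) < x + (m - 1 - D.card) :=
        (g.1 ⟨m - 1, by omega⟩).2
      have h3 := aD_add_inter (D := D) i.1
      have h4 : (Finset.range i.1 ∩ D).card ≤ D.card :=
        Finset.card_le_card Finset.inter_subset_right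
      have h5 : i.1 < m := i.2
      have key0 : ∀ t, 0 ≤ t → t + 1 ≤ m - 1 →
          (fun t => if h : t < m then (g.1 ⟨t, h⟩ : ℕ) else 0) t + 1 ≤
          (fun t => if h : t < m then (g.1 ⟨t, h⟩ : ℕ) else 0) (t + 1) := by
        intro t ht ht'
        have htm : t + 1 < m := by omega
        simp only [dif_pos htm, dif_pos (Nat.lt_of_succ_lt htm)]
        exact g.2 (show (⟨t, Nat.lt_of_succ_lt htm⟩ : Fin m) < ⟨t + 1, htm⟩ from
          by simp [Fin.lt_iff_val_lt_val])
      have h6 := adj_add key0 (Nat.zero_le (m - 1))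
      simp only [dif_pos (show (0:ℕ) < m by omega), dif_pos (show m - 1 < m by omega),
        Fin.eta] at h6
      have h7 : (g.1 ⟨0, by omega⟩ : ℕ) ≥ 0 := Nat.zero_le _
      omega
    · intro t htm
      have hle : (g.1 ⟨t, Nat.lt_of_succ_lt htm⟩ : ℕ) + 1 ≤ (g.1 ⟨t + 1, htm⟩ : ℕ) :=
        g.2 (show (⟨t, Nat.lt_of_succ_lt htm⟩ : Fin m) < ⟨t + 1, htm⟩ from
          by simp [Fin.lt_iff_val_lt_val])
      -- aD D t ≤ g t
      have hge : ∀ s : Fin m, aD D s.1 ≤ (g.1 s : ℕ) := by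
        intro s
        have key : ∀ t, 0 ≤ t → t + 1 ≤ s.1 →
            (fun t => if h : t < m then (g.1 ⟨t, h⟩ : ℕ) else 0) t + 1 ≤
            (fun t => if h : t < m then (g.1 ⟨t, h⟩ : ℕ) else 0) (t + 1) := by
          intro t ht ht'
          have htm : t + 1 < m := by omega
          simp only [dif_pos htm, dif_pos (Nat.lt_of_succ_lt htm)]
          exact g.2 (show (⟨t, Nat.lt_of_succ_lt htm⟩ : Fin m) < ⟨t + 1, htm⟩ from
            by simp [Fin.lt_iff_val_lt_val])
        have := adj_add key (Nat.zero_le s.1)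
        simp only [dif_pos s.2, dif_pos (show (0:ℕ) < m by omega), Fin.eta] at this
        have := aD_le (D := D) s.1
        omega
      have hg1 := hge ⟨t, Nat.lt_of_succ_lt htm⟩
      have hg2 := hge ⟨t + 1, htm⟩
      simp only [Fin.mk_le_mk, Fin.mk_lt_mk] at hg1 hg2 ⊢
      constructor
      · by_cases hmem : t ∈ D
        · rw [aD_succ_mem hmem]
          omega
        · rw [aD_succ_not_mem hmem] at hg2 ⊢
          omega
      · intro hmem
        rw [aD_succ_mem hmem] at hg2 ⊢
        omega
  left_inv y := by
    apply Subtype.ext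
    funext i
    apply Fin.ext
    simp
  right_inv g := by
    apply Subtype.ext
    funext i
    apply Fin.ext
    have hge : aD D i.1 ≤ (g.1 i : ℕ) := by
      have key : ∀ t, 0 ≤ t → t + 1 ≤ i.1 →
          (fun t => if h : t < m then (g.1 ⟨t, h⟩ : ℕ) else 0) t + 1 ≤
          (fun t => if h : t < m then (g.1 ⟨t, h⟩ : ℕ) else 0) (t + 1) := by
        intro t ht ht'
        have htm : t + 1 < m := by omega
        simp only [dif_pos htm, dif_pos (Nat.lt_of_succ_lt htm)]
        exact g.2 (show (⟨t, Nat.lt_of_succ_lt htm⟩ : Fin m) < ⟨t + 1, htm⟩ from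
          by simp [Fin.lt_iff_val_lt_val])
      have := adj_add key (Nat.zero_le i.1)
      simp only [dif_pos i.2, dif_pos (show (0:ℕ) < m by omega), Fin.eta] at this
      have := aD_le (D := D) i.1
      omega
    simp
    omega



def descSet (m : ℕ) (π : Equiv.Perm (Fin m)) : Finset ℕ :=
  (Finset.range (m - 1)).filter (fun i =>
    ∃ h : i + 1 < m, π ⟨i + 1, h⟩ < π ⟨i, Nat.lt_of_succ_lt h⟩)

lemma descSet_subset (m : ℕ) (π : Equiv.Perm (Fin m)) :
    descSet m π ⊆ Finset.range (m - 1) := Finset.filter_subset _ _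

lemma mem_descSet {m : ℕ} {π : Equiv.Perm (Fin m)} {i : ℕ} (h : i + 1 < m) :
    i ∈ descSet m π ↔ π ⟨i + 1, h⟩ < π ⟨i, Nat.lt_of_succ_lt h⟩ := by
  unfold descSet
  simp only [Finset.mem_filter, Finset.mem_range]
  constructor
  · rintro ⟨-, h', hlt⟩; exact hlt
  · intro hlt; exact ⟨by omega, h, hlt⟩

/-- the fiber of `Tuple.sort` over `π` consists of constrained sequences (composed with `π`) -/
lemma sort_fiber_iff {m x : ℕ} (π : Equiv.Perm (Fin m)) (y : Fin m → Fin x) :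
    (Monotone y ∧ ∀ i j : Fin m, i < j → y i = y j → π i < π j) ↔
      Constr m x (descSet m π) y := by
  constructor
  · rintro ⟨hmono, hpair⟩ i hi
    refine ⟨hmono (by simp [Fin.le_iff_val_le_val]), fun hmem => ?_⟩
    rcases lt_or_eq_of_le (hmono (show (⟨i, Nat.lt_of_succ_lt hi⟩ : Fin m) ≤ ⟨i + 1, hi⟩
      from by simp [Fin.le_iff_val_le_val])) with h | h
    · exact h
    · exfalso
      have := hpair ⟨i, Nat.lt_of_succ_lt hi⟩ ⟨i + 1, hi⟩ (by simp [Fin.lt_iff_val_lt_val]) h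
      exact absurd ((mem_descSet hi).1 hmem) (lt_asymm this)
  · intro hc
    have hmono : Monotone y := by
      intro i j hij
      have key : ∀ t, i.1 ≤ t → t + 1 ≤ j.1 →
          (fun t => if h : t < m then (y ⟨t, h⟩ : ℕ) else 0) t ≤
          (fun t => if h : t < m then (y ⟨t, h⟩ : ℕ) else 0) (t + 1) := by
        intro t ht ht'
        have htm : t + 1 < m := Nat.lt_of_le_of_lt ht' j.2
        simp only [dif_pos htm, dif_pos (Nat.lt_of_succ_lt htm)]
        exact (hc t htm).1
      have := adj_le key hij
      simp only [dif_pos i.2, dif_pos j.2, Fin.eta] at this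
      exact this
    refine ⟨hmono, fun i j hij heq => ?_⟩
    -- π strictly increases at each step in [i, j)
    have step : ∀ t, i.1 ≤ t → t + 1 ≤ j.1 →
        (fun t => if h : t < m then (π ⟨t, h⟩ : ℕ) else 0) t + 1 ≤
        (fun t => if h : t < m then (π ⟨t, h⟩ : ℕ) else 0) (t + 1) := by
      intro t ht ht'
      have htm : t + 1 < m := Nat.lt_of_le_of_lt ht' j.2
      simp only [dif_pos htm, dif_pos (Nat.lt_of_succ_lt htm)]
      -- y is constant on [i, j], in particular y⟨t⟩ = y⟨t+1⟩
      have h1 : y i ≤ y ⟨t, Nat.lt_of_succ_lt htm⟩ :=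
        hmono (show i ≤ ⟨t, _⟩ from by simp [Fin.le_iff_val_le_val]; omega)
      have h2 : y ⟨t, Nat.lt_of_succ_lt htm⟩ ≤ y ⟨t + 1, htm⟩ :=
        hmono (by simp [Fin.le_iff_val_le_val])
      have h3 : y ⟨t + 1, htm⟩ ≤ y j :=
        hmono (show (⟨t + 1, htm⟩ : Fin m) ≤ j from by simp [Fin.le_iff_val_le_val]; omega)
      have heq' : y ⟨t, Nat.lt_of_succ_lt htm⟩ = y ⟨t + 1, htm⟩ := by
        rw [heq] at h1
        exact le_antisymm h2 (h3.trans h1)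
      -- hence no descent of π at t
      have hnd : t ∉ descSet m π := by
        intro hmem
        exact absurd heq' (ne_of_lt ((hc t htm).2 hmem))
      rw [mem_descSet htm, not_lt] at hnd
      have hne : π ⟨t, Nat.lt_of_succ_lt htm⟩ ≠ π ⟨t + 1, htm⟩ := by
        intro h
        have := π.injective h
        simp [Fin.ext_iff] at this
      have := lt_of_le_of_ne hnd hne
      simp only [Fin.lt_iff_val_lt_val] at this
      omega
    have := adj_add step (le_of_lt hij)
    simp only [dif_pos i.2, dif_pos j.2, Fin.eta] at this
    have hij' : i.1 < j.1 := hij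
    simp only [Fin.lt_iff_val_lt_val]
    omega


def sortFiberEquiv (m x : ℕ) (π : Equiv.Perm (Fin m)) :
    {w : Fin m → Fin x // Tuple.sort w = π} ≃
      {y : Fin m → Fin x // Constr m x (descSet m π) y} where
  toFun w := ⟨w.1 ∘ ⇑π, by
    have h := Tuple.eq_sort_iff.mp w.2.symm
    exact (sort_fiber_iff π (w.1 ∘ ⇑π)).mp h⟩
  invFun y := ⟨y.1 ∘ ⇑π.symm, by
    symm
    rw [Tuple.eq_sort_iff]
    have h := (sort_fiber_iff π y.1).mpr y.2
    constructor
    · have := h.1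
      intro a b hab
      simpa using this hab
    · intro i j hij heq
      simp only [Function.comp_apply, Equiv.symm_apply_apply] at heq
      exact h.2 i j hij heq⟩
  left_inv w := by
    apply Subtype.ext
    funext i
    simp
  right_inv y := by
    apply Subtype.ext
    funext i
    simp

lemma fiber_card (m x : ℕ) (hm : 1 ≤ m) (π : Equiv.Perm (Fin m)) :
    (Finset.univ.filter (fun w : Fin m → Fin x => Tuple.sort w = π)).card
      = (x + (m - 1 - numDescents m π)).choose m := by
  have hd : numDescents m π = (descSet m π).card := rfl
  have e := ((sortFiberEquiv m x π).trans
    (constrEquiv m x (descSet m π) hm (descSet_subset m π))).trans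
    (strictMonoEquiv m (x + (m - 1 - (descSet m π).card)))
  have h1 : (Finset.univ.filter (fun w : Fin m → Fin x => Tuple.sort w = π)).card
      = Fintype.card {w : Fin m → Fin x // Tuple.sort w = π} :=
    (Fintype.card_subtype _).symm
  rw [h1, Fintype.card_congr e, Fintype.card_finset_len, Fintype.card_fin, hd]

lemma worpitzky_perm (m x : ℕ) (hm : 1 ≤ m) :
    ∑ π : Equiv.Perm (Fin m), (x + (m - 1 - numDescents m π)).choose m = x ^ m := by
  have h1 : (Finset.univ : Finset (Fin m → Fin x)).card = x ^ m := by
    rw [Finset.card_univ, Fintype.card_fun, Fintype.card_fin, Fintype.card_fin]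
  rw [← h1, Finset.card_eq_sum_card_fiberwise
    (f := fun w => Tuple.sort w) (t := Finset.univ) (fun w _ => Finset.mem_univ _)]
  exact Finset.sum_congr rfl (fun π _ => (fiber_card m x hm π).symm)



lemma numDescents_lt (m : ℕ) (hm : 1 ≤ m) (π : Equiv.Perm (Fin m)) :
    numDescents m π < m := by
  have : numDescents m π ≤ m - 1 := by
    have := Finset.card_le_card (descSet_subset m π)
    simpa [numDescents, descSet] using this
  omega

lemma worpitzky_eulerian (m x : ℕ) (hm : 1 ≤ m) :
    ∑ j ∈ Finset.Icc 1 m, eulerianA m j * (x + (m - j)).choose m = x ^ m := by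
  rw [← worpitzky_perm m x hm]
  rw [← Finset.sum_fiberwise_of_maps_to
    (g := fun π : Equiv.Perm (Fin m) => numDescents m π) (t := Finset.range m)
    (fun π _ => Finset.mem_range.2 (numDescents_lt m hm π))
    (f := fun π => (x + (m - 1 - numDescents m π)).choose m)]
  refine Finset.sum_bij' (i := fun j _ => j - 1) (j := fun d _ => d + 1) ?_ ?_ ?_ ?_ ?_
  · intro j hj
    simp only [Finset.mem_Icc] at hj
    simp only [Finset.mem_range]
    omega
  · intro d hd
    simp only [Finset.mem_range] at hd
    simp only [Finset.mem_Icc]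
    omega
  · intro j hj
    simp only [Finset.mem_Icc] at hj
    omega
  · intro d hd
    omega
  · intro j hj
    simp only [Finset.mem_Icc] at hj
    have h1 : ∑ π ∈ Finset.univ.filter
        (fun π : Equiv.Perm (Fin m) => numDescents m π = j - 1),
        (x + (m - 1 - numDescents m π)).choose m
        = ∑ π ∈ Finset.univ.filter
        (fun π : Equiv.Perm (Fin m) => numDescents m π = j - 1),
        (x + (m - 1 - (j - 1))).choose m := by
      refine Finset.sum_congr rfl (fun π hπ => ?_)
      simp only [Finset.mem_filter] at hπ
      rw [hπ.2]
    rw [h1, Finset.sum_const, smul_eq_mul]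
    have : m - 1 - (j - 1) = m - j := by omega
    rw [this]
    rfl


lemma hockey (m a k : ℕ) (ha : a ≤ m) :
    ∑ i ∈ Finset.range k, (i + a).choose m = (k + a).choose (m + 1) := by
  induction k with
  | zero =>
    simp [Nat.choose_eq_zero_of_lt (by omega : a < m + 1)]
  | succ k ih =>
    rw [Finset.sum_range_succ, ih]
    have : k + 1 + a = (k + a) + 1 := by omega
    rw [this, Nat.choose_succ_succ (k + a) m]
    simp only [Nat.succ_eq_add_one]
    omega

lemma W1 (m k : ℕ) (hm : 1 ≤ m) :
    ∑ j ∈ Finset.Icc 1 m, eulerianA m j * (k + (m - j)).choose (m + 1)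
      = ∑ i ∈ Finset.range k, i ^ m := by
  have h1 : ∀ j ∈ Finset.Icc 1 m, eulerianA m j * (k + (m - j)).choose (m + 1)
      = ∑ i ∈ Finset.range k, eulerianA m j * (i + (m - j)).choose m := by
    intro j hj
    simp only [Finset.mem_Icc] at hj
    rw [← Finset.mul_sum, hockey m (m - j) k (by omega)]
  rw [Finset.sum_congr rfl h1, Finset.sum_comm]
  exact Finset.sum_congr rfl (fun i _ => worpitzky_eulerian m i hm)

lemma W2 (m k : ℕ) (hm : 1 ≤ m) :
    ∑ j ∈ Finset.Icc 1 m, eulerianA m j * (k + (m - j)).choose (m + 2)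
      = ∑ i ∈ Finset.range k, ∑ l ∈ Finset.range i, l ^ m := by
  have h1 : ∀ j ∈ Finset.Icc 1 m, eulerianA m j * (k + (m - j)).choose (m + 2)
      = ∑ i ∈ Finset.range k, eulerianA m j * (i + (m - j)).choose (m + 1) := by
    intro j hj
    simp only [Finset.mem_Icc] at hj
    rw [← Finset.mul_sum]
    congr 1
    exact (hockey (m + 1) (m - j) k (by omega)).symm
  rw [Finset.sum_congr rfl h1, Finset.sum_comm]
  exact Finset.sum_congr rfl (fun i _ => W1 m i hm)

lemma dsum (f : ℕ → ℕ) (k : ℕ) :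
    ∑ i ∈ Finset.range k, ∑ l ∈ Finset.range i, f l
      = ∑ l ∈ Finset.range k, (k - 1 - l) * f l := by
  induction k with
  | zero => simp
  | succ k ih =>
    rw [Finset.sum_range_succ, ih, Finset.sum_range_succ]
    have h1 : ∀ l ∈ Finset.range k, (k + 1 - 1 - l) * f l = (k - 1 - l) * f l + f l := by
      intro l hl
      simp only [Finset.mem_range] at hl
      have : k + 1 - 1 - l = (k - 1 - l) + 1 := by omega
      rw [this]; ring
    rw [Finset.sum_congr rfl h1, Finset.sum_add_distrib]
    simp

lemma B1 (N m : ℕ) :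
    ((N : ℝ) - m) * (N.choose m : ℝ) = ((m : ℝ) + 1) * (N.choose (m + 1) : ℝ) := by
  rcases le_or_gt m N with h | h
  · have key := Nat.choose_succ_right_eq N m
    have hcast : ((N - m : ℕ) : ℝ) = (N : ℝ) - m := by
      rw [Nat.cast_sub h]
    have := congrArg (fun t : ℕ => (t : ℝ)) key
    push_cast at this
    rw [Nat.cast_sub h] at this
    linarith [this]
  · rw [Nat.choose_eq_zero_of_lt h, Nat.choose_eq_zero_of_lt (by omega : N < m + 1)]
    simp

lemma B2 (N m : ℕ) :
    ((N : ℝ) - m) ^ 2 * (N.choose m : ℝ)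
      = ((m : ℝ) + 1) * ((m : ℝ) + 2) * (N.choose (m + 2) : ℝ)
        + ((m : ℝ) + 1) * (N.choose (m + 1) : ℝ) := by
  have h1 := B1 N m
  have h2 := B1 N (m + 1)
  push_cast at h2
  nlinarith [h1, h2]

end Stmt11

open Stmt11 in
/-- a closed form for `(1/n)·Σ_{j=1}^{n-1} j²·A_{n-1,j}·binom(n+k-j-1, n-1)`. -/
theorem sum_jsq_eulerian_choose (n k : ℕ) (hn : 2 ≤ n) (hk : 1 ≤ k) :
    (1 / (n : ℝ)) * ∑ j ∈ Finset.Icc 1 (n - 1),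
        (j : ℝ) ^ 2 * (eulerianA (n - 1) j : ℝ) * (Nat.choose (n + k - j - 1) (n - 1) : ℝ)
      = (k : ℝ) ^ (n + 1) / (n : ℝ)
        - ((n : ℝ) + 1) * ∑ s ∈ Finset.Icc 1 (k - 2), (s : ℝ) ^ n
        - 2 * ((k : ℝ) - 1) ^ n
        - ∑ s ∈ Finset.Icc 1 (k - 1), (s : ℝ) ^ (n - 1)
        + ((n : ℝ) - 1) * ((k : ℝ) - 1) * ∑ s ∈ Finset.Icc 1 (k - 2), (s : ℝ) ^ (n - 1) := by
  obtain ⟨m, rfl⟩ : ∃ m, n = m + 1 := ⟨n - 1, by omega⟩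
  have hm : 1 ≤ m := by omega
  simp only [Nat.add_sub_cancel]
  -- abbreviations
  have hnR : ((m : ℝ) + 1) ≠ 0 := by positivity
  -- step 1 : rewrite the binomial index
  have e1 : ∑ j ∈ Finset.Icc 1 m,
        (j : ℝ) ^ 2 * (eulerianA m j : ℝ) * (Nat.choose (m + 1 + k - j - 1) m : ℝ)
      = ∑ j ∈ Finset.Icc 1 m,
        (j : ℝ) ^ 2 * (eulerianA m j : ℝ) * (Nat.choose (k + (m - j)) m : ℝ) := by
    refine Finset.sum_congr rfl (fun j hj => ?_)
    simp only [Finset.mem_Icc] at hj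
    have : m + 1 + k - j - 1 = k + (m - j) := by omega
    rw [this]
  -- step 2 : the per-term binomial expansion
  have key : ∑ j ∈ Finset.Icc 1 m,
        (j : ℝ) ^ 2 * (eulerianA m j : ℝ) * (Nat.choose (k + (m - j)) m : ℝ)
      = (k : ℝ) ^ 2 * (∑ j ∈ Finset.Icc 1 m,
            (eulerianA m j : ℝ) * (Nat.choose (k + (m - j)) m : ℝ))
        - 2 * (k : ℝ) * ((m : ℝ) + 1) * (∑ j ∈ Finset.Icc 1 m,
            (eulerianA m j : ℝ) * (Nat.choose (k + (m - j)) (m + 1) : ℝ))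
        + ((m : ℝ) + 1) * ((m : ℝ) + 2) * (∑ j ∈ Finset.Icc 1 m,
            (eulerianA m j : ℝ) * (Nat.choose (k + (m - j)) (m + 2) : ℝ))
        + ((m : ℝ) + 1) * (∑ j ∈ Finset.Icc 1 m,
            (eulerianA m j : ℝ) * (Nat.choose (k + (m - j)) (m + 1) : ℝ)) := by
    rw [Finset.mul_sum, Finset.mul_sum, Finset.mul_sum, Finset.mul_sum,
      ← Finset.sum_sub_distrib, ← Finset.sum_add_distrib, ← Finset.sum_add_distrib]
    refine Finset.sum_congr rfl (fun j hj => ?_)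
    simp only [Finset.mem_Icc] at hj
    set N := k + (m - j) with hN
    have hNc : (N : ℝ) = (k : ℝ) + (m : ℝ) - (j : ℝ) := by
      rw [hN]
      push_cast [Nat.cast_sub hj.2]
      ring
    have hb1 := B1 N m
    have hb2 := B2 N m
    have hj2 : (j : ℝ) = (k : ℝ) - ((N : ℝ) - (m : ℝ)) := by linarith
    linear_combination ((j : ℝ) + (k : ℝ) - ((N : ℝ) - (m : ℝ)))
        * (eulerianA m j : ℝ) * (Nat.choose N m : ℝ) * hj2
      + (eulerianA m j : ℝ) * hb2 - 2 * (k : ℝ) * (eulerianA m j : ℝ) * hb1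
  -- step 3 : cast the three Worpitzky-type identities
  have hW0 : ∑ j ∈ Finset.Icc 1 m,
      (eulerianA m j : ℝ) * (Nat.choose (k + (m - j)) m : ℝ) = (k : ℝ) ^ m := by
    exact_mod_cast congrArg (Nat.cast : ℕ → ℝ) (worpitzky_eulerian m k hm)
  have hW1 : ∑ j ∈ Finset.Icc 1 m,
      (eulerianA m j : ℝ) * (Nat.choose (k + (m - j)) (m + 1) : ℝ)
      = ∑ i ∈ Finset.range k, (i : ℝ) ^ m := by
    exact_mod_cast congrArg (Nat.cast : ℕ → ℝ) (W1 m k hm)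
  have hW2 : ∑ j ∈ Finset.Icc 1 m,
      (eulerianA m j : ℝ) * (Nat.choose (k + (m - j)) (m + 2) : ℝ)
      = ∑ l ∈ Finset.range k, ((k - 1 - l : ℕ) : ℝ) * (l : ℝ) ^ m := by
    have := (W2 m k hm).trans (dsum (fun l => l ^ m) k)
    exact_mod_cast congrArg (Nat.cast : ℕ → ℝ) this
  -- step 4 : range/Icc conversions
  have hP : ∑ i ∈ Finset.range k, (i : ℝ) ^ m = ∑ s ∈ Finset.Icc 1 (k - 1), (s : ℝ) ^ m := by
    symm
    refine Finset.sum_subset ?_ ?_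
    · intro s hs
      simp only [Finset.mem_Icc] at hs
      simp only [Finset.mem_range]
      omega
    · intro i hi hi'
      simp only [Finset.mem_range] at hi
      simp only [Finset.mem_Icc] at hi'
      have : i = 0 := by omega
      subst this
      simp only [Nat.cast_zero]
      exact zero_pow (by omega)
  have hQ : ∑ l ∈ Finset.range k, ((k - 1 - l : ℕ) : ℝ) * (l : ℝ) ^ m
      = ((k : ℝ) - 1) * (∑ s ∈ Finset.Icc 1 (k - 2), (s : ℝ) ^ m)
        - ∑ s ∈ Finset.Icc 1 (k - 2), (s : ℝ) ^ (m + 1) := by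
    have h1 : ∑ l ∈ Finset.range k, ((k - 1 - l : ℕ) : ℝ) * (l : ℝ) ^ m
        = ∑ l ∈ Finset.Icc 1 (k - 2), (((k : ℝ) - 1) * (l : ℝ) ^ m - (l : ℝ) ^ (m + 1)) := by
      symm
      rw [← Finset.sum_subset (show Finset.Icc 1 (k - 2) ⊆ Finset.range k from ?_) ?_]
      · refine Finset.sum_congr rfl (fun l hl => ?_)
        simp only [Finset.mem_Icc] at hl
        have hc : ((k - 1 - l : ℕ) : ℝ) = (k : ℝ) - 1 - (l : ℝ) := by
          have h2 : ((k - 1 - l : ℕ) : ℝ) = ((k - 1 : ℕ) : ℝ) - (l : ℝ) :=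
            Nat.cast_sub (by omega)
          rw [h2, Nat.cast_sub (by omega : 1 ≤ k)]
          push_cast
          ring
        rw [hc]
        ring
      · intro s hs
        simp only [Finset.mem_Icc] at hs
        simp only [Finset.mem_range]
        omega
      · intro l hl hl'
        simp only [Finset.mem_range] at hl
        simp only [Finset.mem_Icc] at hl'
        rcases Nat.eq_zero_or_pos l with rfl | hl0
        · simp [zero_pow (by omega : m ≠ 0)]
        · have : l = k - 1 := by omega
          subst this
          have : k - 1 - (k - 1) = 0 := by omega
          rw [this]
          simp
    rw [h1, Finset.sum_sub_distrib, Finset.mul_sum]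
  have hsplit : ∑ s ∈ Finset.Icc 1 (k - 1), (s : ℝ) ^ m
      = ∑ s ∈ Finset.Icc 1 (k - 2), (s : ℝ) ^ m + ((k : ℝ) - 1) ^ m := by
    rcases Nat.lt_or_ge k 2 with hk2 | hk2
    · have : k = 1 := by omega
      subst this
      simp [zero_pow (by omega : m ≠ 0)]
    · have h2 : k - 1 = (k - 2) + 1 := by omega
      rw [h2, Finset.sum_Icc_succ_top (by omega : 1 ≤ k - 2 + 1)]
      have : ((k - 2 + 1 : ℕ) : ℝ) = (k : ℝ) - 1 := by
        have : (k - 2 + 1 : ℕ) = k - 1 := by omega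
        rw [this, Nat.cast_sub (by omega : 1 ≤ k)]
        push_cast
        ring
      rw [this]
  -- step 5 : put everything together
  rw [e1, key, hW0, hW1, hW2, hP, hQ, hsplit]
  have hpow : ((k : ℝ) - 1) ^ (m + 1) = ((k : ℝ) - 1) * ((k : ℝ) - 1) ^ m := by
    ring
  push_cast
  rw [hpow]
  field_simp
  ring
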